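/- Separability criterion from a universal uncertainty relation: Let Ω be a convex, Schur-concave function on probability vectors, and suppose the uncertainty relation ∑_{i=1}^m Ω(p_{x_i}(η)) ≥ Ω(ω_x) holds for all states η on H_A. If ρ = ∑_λ t_λ η_λ ⊗ σ_λ is a separable state (t_λ ≥ 0, ∑ t_λ = 1), then ∑_{i=1}^m Ω(p_{x_i ⊗ y_i}(ρ)) ≥ Ω(ω_x), where p_{x_i ⊗ y_i}(ρ) is the joint outcome distribution of the product measurement x_i ⊗ y_i on ρ. -/

import Mathlib

open Finset Kronecker ComplexOrder

/-- Non-increasing rearrangement of `p`. -/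
noncomputable def sortDesc {n : ℕ} (p : Fin n → ℝ) : Fin n → ℝ :=
  fun i => p (Tuple.sort p i.rev)

/-- Sum of the `k` largest entries of `p`. -/
noncomputable def partialSum {n : ℕ} (p : Fin n → ℝ) (k : ℕ) : ℝ :=
  ∑ i ∈ Finset.univ.filter (fun i : Fin n => (i : ℕ) < k), sortDesc p i

/-- `p ⪯ q`: `p` is majorized by `q`. -/
noncomputable def MajorizedBy {n : ℕ} (p q : Fin n → ℝ) : Prop :=
  (∀ k : ℕ, partialSum p k ≤ partialSum q k) ∧ (∑ i, p i = ∑ i, q i)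

def IsProbVec {n : ℕ} (p : Fin n → ℝ) : Prop :=
  (∀ i, 0 ≤ p i) ∧ ∑ i, p i = 1

/-- Tensor (Kronecker) product of vectors. -/
def tensorVec {d e : ℕ} (p : Fin d → ℝ) (q : Fin e → ℝ) : Fin (d * e) → ℝ :=
  fun k => p (finProdFinEquiv.symm k).1 * q (finProdFinEquiv.symm k).2

/-- Pad a vector with trailing zeros. -/
def padVec {d m : ℕ} (p : Fin d → ℝ) : Fin m → ℝ :=
  fun i => if h : (i : ℕ) < d then p ⟨i, h⟩ else 0

def DoublyStochastic {ι : Type*} [Fintype ι] (M : Matrix ι ι ℝ) : Prop :=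
  (∀ i j, 0 ≤ M i j) ∧ (∀ i, ∑ j, M i j = 1) ∧ (∀ j, ∑ i, M i j = 1)

def IsDensityMatrix {ι : Type*} [Fintype ι] [DecidableEq ι] (ρ : Matrix ι ι ℂ) : Prop :=
  ρ.PosSemidef ∧ ρ.trace = 1

def IsPOVM {ι : Type*} [Fintype ι] [DecidableEq ι] {d : ℕ} (F : Fin d → Matrix ι ι ℂ) : Prop :=
  (∀ a, (F a).PosSemidef) ∧ ∑ a, F a = 1

/-- Outcome distribution of POVM `F` on state `ρ`. -/
noncomputable def outDist {ι : Type*} [Fintype ι] [DecidableEq ι] {d : ℕ}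
    (F : Fin d → Matrix ι ι ℂ) (ρ : Matrix ι ι ℂ) : Fin d → ℝ :=
  fun a => (Matrix.trace (F a * ρ)).re



-- ===== auxiliary lemmas =====

lemma strictMono_nat_le {k : ℕ} (v : Fin k → ℕ) (hv : StrictMono v) : ∀ j : Fin k, (j:ℕ) ≤ v j := by
  suffices h : ∀ m (j : Fin k), (j:ℕ) = m → m ≤ v j by
    intro j; exact h _ j rfl
  intro m
  induction m with
  | zero => intro j _; exact Nat.zero_le _
  | succ i ih =>
    intro j hj
    have hi : i < k := by omega
    have h1 : (⟨i, hi⟩ : Fin k) < j := by simp [Fin.lt_def, hj]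
    have h2 := ih ⟨i, hi⟩ rfl
    have h3 := hv h1
    omega

lemma antitone_sum_le {n : ℕ} (g : Fin n → ℝ) (hg : Antitone g) (S : Finset (Fin n)) :
    ∑ i ∈ S, g i ≤ ∑ i ∈ univ.filter (fun i : Fin n => (i:ℕ) < S.card), g i := by
  have hk : S.card ≤ n := by simpa using S.card_le_univ
  have h1 : ∑ i ∈ S, g i = ∑ j : Fin S.card, g (S.orderEmbOfFin rfl j) := by
    refine (Finset.sum_bij (fun j _ => S.orderEmbOfFin rfl j)
      (fun j _ => Finset.orderEmbOfFin_mem S rfl j) ?_ ?_ (fun _ _ => rfl)).symm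
    · intro a _ b _ hab; exact (S.orderEmbOfFin rfl).injective hab
    · intro b hb
      have : b ∈ Set.range (S.orderEmbOfFin rfl) := by
        rw [Finset.range_orderEmbOfFin]; exact hb
      obtain ⟨j, hj⟩ := this
      exact ⟨j, mem_univ j, hj⟩
  have h2 : ∑ i ∈ univ.filter (fun i : Fin n => (i:ℕ) < S.card), g i
      = ∑ j : Fin S.card, g (Fin.castLE hk j) := by
    refine (Finset.sum_bij (fun j _ => Fin.castLE hk j) ?_ ?_ ?_ (fun _ _ => rfl)).symm
    · intro j _; simp
    · intro a _ b _ hab; exact Fin.castLE_injective hk hab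
    · intro b hb
      simp only [mem_filter, mem_univ, true_and] at hb
      exact ⟨⟨b, hb⟩, mem_univ _, rfl⟩
  rw [h1, h2]
  refine Finset.sum_le_sum fun j _ => hg ?_
  have := strictMono_nat_le (fun j => ((S.orderEmbOfFin rfl j : Fin n) : ℕ))
    (fun a b hab => (S.orderEmbOfFin rfl).strictMono hab) j
  rw [Fin.le_def]
  simpa using this

lemma antitone_sortDesc {n : ℕ} (p : Fin n → ℝ) : Antitone (sortDesc p) := by
  intro a b hab
  exact Tuple.monotone_sort p (Fin.rev_le_rev.mpr hab)

lemma sortDesc_eq_comp {n : ℕ} (p : Fin n → ℝ) :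
    sortDesc p = p ∘ (Fin.revPerm.trans (Tuple.sort p)) := rfl

lemma sum_le_partialSum {n : ℕ} (p : Fin n → ℝ) (S : Finset (Fin n)) :
    ∑ i ∈ S, p i ≤ partialSum p S.card := by
  set φ : Equiv.Perm (Fin n) := Fin.revPerm.trans (Tuple.sort p) with hφ
  have h1 : ∑ i ∈ S, p i = ∑ j ∈ S.map φ.symm.toEmbedding, sortDesc p j := by
    rw [Finset.sum_map]
    refine Finset.sum_congr rfl fun i _ => ?_
    simp [sortDesc_eq_comp, hφ]
  have h2 : (S.map φ.symm.toEmbedding).card = S.card := Finset.card_map _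
  rw [h1, ← h2]
  exact antitone_sum_le (sortDesc p) (antitone_sortDesc p) _

lemma partialSum_mono {n : ℕ} (p : Fin n → ℝ) (hp : ∀ i, 0 ≤ p i) :
    Monotone (partialSum p) := by
  intro j k hjk
  refine Finset.sum_le_sum_of_subset_of_nonneg ?_ (fun i _ _ => hp _)
  intro i hi
  simp only [mem_filter, mem_univ, true_and] at hi ⊢
  omega

lemma partialSum_eq_sum {n : ℕ} (p : Fin n → ℝ) (k : ℕ) :
    ∃ T : Finset (Fin n), T.card ≤ k ∧ partialSum p k = ∑ i ∈ T, p i := by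
  set φ : Equiv.Perm (Fin n) := Fin.revPerm.trans (Tuple.sort p) with hφ
  refine ⟨(univ.filter (fun i : Fin n => (i : ℕ) < k)).map φ.toEmbedding, ?_, ?_⟩
  · rw [Finset.card_map]
    have : (univ.filter (fun i : Fin n => (i : ℕ) < k)).card
        ≤ (Finset.range k).card := by
      refine Finset.card_le_card_of_injOn (fun i => (i:ℕ)) ?_ ?_
      · intro i hi; simp only [coe_filter, mem_coe, mem_filter, Set.mem_setOf_eq] at hi; simpa using hi.2
      · intro a _ b _ hab; exact Fin.val_injective hab
    simpa using this
  · rw [Finset.sum_map]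
    rfl

lemma sum_tensorVec {d e : ℕ} (p : Fin d → ℝ) (q : Fin e → ℝ) :
    ∑ k, tensorVec p q k = (∑ a, p a) * (∑ b, q b) := by
  have h1 : ∑ k, tensorVec p q k = ∑ x : Fin d × Fin e, p x.1 * q x.2 := by
    refine (Fintype.sum_equiv finProdFinEquiv _ _ fun x => ?_).symm
    simp [tensorVec]
  rw [h1, Fintype.sum_prod_type, ← Finset.sum_mul_sum]

lemma sum_padVec {d m : ℕ} (hd : d ≤ m) (p : Fin d → ℝ) :
    ∑ k : Fin m, (padVec p : Fin m → ℝ) k = ∑ a, p a := by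
  have h1 : ∑ k : Fin m, (padVec p : Fin m → ℝ) k
      = ∑ k ∈ (univ : Finset (Fin d)).map (Fin.castLEEmb hd), (padVec p : Fin m → ℝ) k := by
    refine (Finset.sum_subset (Finset.subset_univ _) ?_).symm
    intro k _ hk
    simp only [Finset.mem_map, Finset.mem_univ, true_and, not_exists] at hk
    have : ¬ (k : ℕ) < d := by
      intro hlt
      exact hk ⟨k, hlt⟩ (by simp [Fin.castLEEmb, Fin.castLE, Fin.ext_iff])
    simp [padVec, this]
  rw [h1, Finset.sum_map]
  exact Finset.sum_congr rfl fun a _ => by simp [padVec, Fin.castLEEmb]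

lemma padVec_nonneg {d m : ℕ} (p : Fin d → ℝ) (hp : ∀ i, 0 ≤ p i) (i : Fin m) :
    0 ≤ (padVec p : Fin m → ℝ) i := by
  unfold padVec; split <;> simp [hp]

lemma tensorVec_majorizedBy {d e : ℕ} (p : Fin d → ℝ) (q : Fin e → ℝ)
    (hp : IsProbVec p) (hq : IsProbVec q) :
    MajorizedBy (tensorVec p q) (padVec p : Fin (d*e) → ℝ) := by
  have he : 0 < e := by
    rcases Nat.eq_zero_or_pos e with h | h
    · exfalso; have := hq.2; subst h; simp at this
    · exact h
  have hd : d ≤ d * e := Nat.le_mul_of_pos_right d he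
  constructor
  · intro k
    obtain ⟨T, hTcard, hTeq⟩ := partialSum_eq_sum (tensorVec p q) k
    rw [hTeq]
    set S : Finset (Fin d × Fin e) := T.image (fun i => finProdFinEquiv.symm i) with hS
    have hsum : ∑ i ∈ T, tensorVec p q i = ∑ x ∈ S, p x.1 * q x.2 := by
      rw [hS, Finset.sum_image (fun a _ b _ hab => finProdFinEquiv.symm.injective hab)]
      rfl
    set A : Finset (Fin d) := S.image Prod.fst with hA
    have hgroup : ∑ x ∈ S, p x.1 * q x.2
        = ∑ a ∈ A, ∑ x ∈ S.filter (fun x => x.1 = a), p x.1 * q x.2 :=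
      (Finset.sum_fiberwise_of_maps_to (fun x hx => Finset.mem_image_of_mem _ hx) _).symm
    have hinner : ∀ a ∈ A, ∑ x ∈ S.filter (fun x => x.1 = a), p x.1 * q x.2 ≤ p a := by
      intro a _
      have h1 : ∑ x ∈ S.filter (fun x => x.1 = a), p x.1 * q x.2
          = p a * ∑ x ∈ S.filter (fun x => x.1 = a), q x.2 := by
        rw [Finset.mul_sum]
        refine Finset.sum_congr rfl fun x hx => ?_
        simp only [Finset.mem_filter] at hx
        rw [hx.2]
      rw [h1]
      have h2 : ∑ x ∈ S.filter (fun x => x.1 = a), q x.2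
          = ∑ b ∈ (S.filter (fun x => x.1 = a)).image Prod.snd, q b := by
        refine (Finset.sum_image ?_).symm
        intro x hx y hy hxy
        simp only [Finset.coe_filter, Finset.mem_coe, Finset.mem_filter, Set.mem_setOf_eq] at hx hy
        exact Prod.ext (hx.2.trans hy.2.symm) hxy
      have h3 : ∑ b ∈ (S.filter (fun x => x.1 = a)).image Prod.snd, q b ≤ ∑ b, q b :=
        Finset.sum_le_sum_of_subset_of_nonneg (Finset.subset_univ _) (fun b _ _ => hq.1 b)
      calc p a * ∑ x ∈ S.filter (fun x => x.1 = a), q x.2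
          ≤ p a * 1 := by
            refine mul_le_mul_of_nonneg_left ?_ (hp.1 a)
            rw [h2]; rw [hq.2] at h3; exact h3
        _ = p a := mul_one _
    have hAcard : A.card ≤ k := by
      calc A.card ≤ S.card := Finset.card_image_le
        _ ≤ T.card := Finset.card_image_le
        _ ≤ k := hTcard
    have hfinal : ∑ a ∈ A, p a ≤ partialSum (padVec p : Fin (d*e) → ℝ) k := by
      have h4 : ∑ a ∈ A, p a = ∑ i ∈ A.map (Fin.castLEEmb hd), (padVec p : Fin (d*e) → ℝ) i := by
        rw [Finset.sum_map]
        exact (Finset.sum_congr rfl fun a _ => by simp [padVec, Fin.castLEEmb]).symm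
      rw [h4]
      calc ∑ i ∈ A.map (Fin.castLEEmb hd), (padVec p : Fin (d*e) → ℝ) i
          ≤ partialSum (padVec p) (A.map (Fin.castLEEmb hd)).card :=
            sum_le_partialSum _ _
        _ ≤ partialSum (padVec p) k := by
            refine partialSum_mono _ (padVec_nonneg p hp.1) ?_
            rw [Finset.card_map]; exact hAcard
    calc ∑ i ∈ T, tensorVec p q i = ∑ x ∈ S, p x.1 * q x.2 := hsum
      _ = ∑ a ∈ A, ∑ x ∈ S.filter (fun x => x.1 = a), p x.1 * q x.2 := hgroup
      _ ≤ ∑ a ∈ A, p a := Finset.sum_le_sum hinner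
      _ ≤ partialSum (padVec p) k := hfinal
  · rw [sum_tensorVec, hp.2, hq.2, sum_padVec hd, hp.2]
    ring

lemma psd_trace_re_nonneg {ι : Type*} [Fintype ι] [DecidableEq ι] {M : Matrix ι ι ℂ}
    (hM : M.PosSemidef) : 0 ≤ M.trace.re := by
  rw [Matrix.trace, Complex.re_sum]
  refine Finset.sum_nonneg fun i _ => ?_
  have := hM.re_dotProduct_nonneg (Pi.single i 1)
  simpa [dotProduct, Matrix.mulVec, Pi.single_apply, Matrix.diag] using this

lemma psd_trace_mul_re_nonneg {ι : Type*} [Fintype ι] [DecidableEq ι] {A B : Matrix ι ι ℂ}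
    (hA : A.PosSemidef) (hB : B.PosSemidef) : 0 ≤ (Matrix.trace (A * B)).re := by
  obtain ⟨C, hC⟩ : ∃ C : Matrix ι ι ℂ, A = C.conjTranspose * C := by
    open scoped MatrixOrder in
    obtain ⟨C, hC⟩ := CStarAlgebra.nonneg_iff_eq_star_mul_self.mp hA.nonneg
    exact ⟨C, hC⟩
  rw [hC, Matrix.mul_assoc, Matrix.trace_mul_comm]
  exact psd_trace_re_nonneg (hB.mul_mul_conjTranspose_same C)

lemma herm_trace_mul_im_zero {ι : Type*} [Fintype ι] [DecidableEq ι] {A B : Matrix ι ι ℂ}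
    (hA : A.IsHermitian) (hB : B.IsHermitian) : (Matrix.trace (A * B)).im = 0 := by
  have h : star (Matrix.trace (A * B)) = Matrix.trace (A * B) := by
    rw [← Matrix.trace_conjTranspose, Matrix.conjTranspose_mul, hA.eq, hB.eq,
      Matrix.trace_mul_comm]
  exact Complex.conj_eq_iff_im.mp h

lemma outDist_probVec {ι : Type*} [Fintype ι] [DecidableEq ι] {d : ℕ}
    {F : Fin d → Matrix ι ι ℂ} {ρ : Matrix ι ι ℂ}
    (hF : IsPOVM F) (hρ : IsDensityMatrix ρ) : IsProbVec (outDist F ρ) := by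
  constructor
  · intro a; exact psd_trace_mul_re_nonneg (hF.1 a) hρ.1
  · have h : ∑ a, Matrix.trace (F a * ρ) = Matrix.trace ρ := by
      rw [← Matrix.trace_sum, ← Matrix.sum_mul, hF.2, one_mul]
    calc ∑ a, (Matrix.trace (F a * ρ)).re = (∑ a, Matrix.trace (F a * ρ)).re :=
          (Complex.re_sum _ _).symm
      _ = 1 := by rw [h, hρ.2]; simp

/-- separability criterion from a universal uncertainty relation. -/
theorem entanglement_criterion_universal_UR {dA dB d m N L : ℕ}
    (Omega : (n : ℕ) → (Fin n → ℝ) → ℝ)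
    -- Schur-concavity of the uncertainty quantifier
    (hschur : ∀ (n : ℕ) (p q : Fin n → ℝ), MajorizedBy p q → Omega n q ≤ Omega n p)
    -- probabilistic mixing does not decrease uncertainty (convexity, as in the paper)
    (hmix : ∀ (n M : ℕ) (t : Fin M → ℝ) (v : Fin M → Fin n → ℝ),
      (∀ l, 0 ≤ t l) → (∑ l, t l = 1) →
      ∑ l, t l * Omega n (v l) ≤ Omega n (fun j => ∑ l, t l * v l j))
    -- the quantifier is insensitive to padding with trailing zeros
    (hpad : ∀ p : Fin d → ℝ, Omega (d * d) (padVec p) = Omega d p)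
    -- Alice's and Bob's measurements
    (F : Fin m → Fin d → Matrix (Fin dA) (Fin dA) ℂ)
    (G : Fin m → Fin d → Matrix (Fin dB) (Fin dB) ℂ)
    (hF : ∀ i, IsPOVM (F i)) (hG : ∀ i, IsPOVM (G i))
    -- the universal uncertainty relation for Alice's measurements
    (ω : Fin N → ℝ)
    (hUR : ∀ η : Matrix (Fin dA) (Fin dA) ℂ, IsDensityMatrix η →
      Omega N ω ≤ ∑ i, Omega d (outDist (F i) η))
    -- a separable state
    (t : Fin L → ℝ) (ht : ∀ l, 0 ≤ t l) (ht1 : ∑ l, t l = 1)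
    (η : Fin L → Matrix (Fin dA) (Fin dA) ℂ) (hη : ∀ l, IsDensityMatrix (η l))
    (σ : Fin L → Matrix (Fin dB) (Fin dB) ℂ) (hσ : ∀ l, IsDensityMatrix (σ l))
    (ρ : Matrix (Fin dA × Fin dB) (Fin dA × Fin dB) ℂ)
    (hρ : ρ = ∑ l, t l • (η l ⊗ₖ σ l)) :
    Omega N ω ≤ ∑ i, Omega (d * d) (fun k =>
      (Matrix.trace
        ((F i (finProdFinEquiv.symm k).1 ⊗ₖ G i (finProdFinEquiv.symm k).2) * ρ)).re) := by
  classical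
  set pA : Fin m → Fin L → Fin d → ℝ := fun i l => outDist (F i) (η l) with hpAdef
  set qB : Fin m → Fin L → Fin d → ℝ := fun i l => outDist (G i) (σ l) with hqBdef
  have hpAprob : ∀ i l, IsProbVec (pA i l) := fun i l => outDist_probVec (hF i) (hη l)
  have hqBprob : ∀ i l, IsProbVec (qB i l) := fun i l => outDist_probVec (hG i) (hσ l)
  have hjoint : ∀ i, (fun k : Fin (d * d) =>
      (Matrix.trace ((F i (finProdFinEquiv.symm k).1 ⊗ₖ G i (finProdFinEquiv.symm k).2) * ρ)).re)
      = fun k => ∑ l, t l * tensorVec (pA i l) (qB i l) k := by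
    intro i; funext k
    rw [hρ, Matrix.mul_sum, Matrix.trace_sum, Complex.re_sum]
    refine Finset.sum_congr rfl fun l _ => ?_
    have him1 := herm_trace_mul_im_zero ((hF i).1 (finProdFinEquiv.symm k).1).1 (hη l).1.1
    have him2 := herm_trace_mul_im_zero ((hG i).1 (finProdFinEquiv.symm k).2).1 (hσ l).1.1
    rw [Matrix.mul_smul, Matrix.trace_smul, ← Matrix.mul_kronecker_mul, Matrix.trace_kronecker]
    show (t l • ((F i (finProdFinEquiv.symm k).1 * η l).trace *
        (G i (finProdFinEquiv.symm k).2 * σ l).trace)).re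
      = t l * ((F i (finProdFinEquiv.symm k).1 * η l).trace.re *
        (G i (finProdFinEquiv.symm k).2 * σ l).trace.re)
    rw [Complex.real_smul, Complex.mul_re, Complex.mul_re, him1, him2]
    simp
  have key : ∀ i, ∑ l, t l * Omega d (pA i l)
      ≤ Omega (d * d) (fun k =>
        (Matrix.trace
          ((F i (finProdFinEquiv.symm k).1 ⊗ₖ G i (finProdFinEquiv.symm k).2) * ρ)).re) := by
    intro i
    rw [hjoint i]
    calc ∑ l, t l * Omega d (pA i l)
        = ∑ l, t l * Omega (d * d) (padVec (pA i l)) := by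
          refine Finset.sum_congr rfl fun l _ => ?_
          rw [hpad]
      _ ≤ ∑ l, t l * Omega (d * d) (tensorVec (pA i l) (qB i l)) := by
          refine Finset.sum_le_sum fun l _ => mul_le_mul_of_nonneg_left ?_ (ht l)
          exact hschur _ _ _ (tensorVec_majorizedBy _ _ (hpAprob i l) (hqBprob i l))
      _ ≤ Omega (d * d) (fun k => ∑ l, t l * tensorVec (pA i l) (qB i l) k) :=
          hmix _ _ t _ ht ht1
  calc Omega N ω = ∑ l, t l * Omega N ω := by
        rw [← Finset.sum_mul, ht1, one_mul]
    _ ≤ ∑ l, t l * ∑ i, Omega d (pA i l) :=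
        Finset.sum_le_sum fun l _ => mul_le_mul_of_nonneg_left (hUR (η l) (hη l)) (ht l)
    _ = ∑ i, ∑ l, t l * Omega d (pA i l) := by
        simp_rw [Finset.mul_sum]; rw [Finset.sum_comm]
    _ ≤ _ := Finset.sum_le_sum fun i _ => key i
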